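/- Let k ≥ 2, G a graph, and W ⊆ V(G). If W is a face of the k-cut complex Δₖ(G), then lk_{Δₖ(G)}(W) = Δₖ(G ∖ W); otherwise lk_{Δₖ(G)}(W) is the void complex. -/

import Mathlib

open Finset

attribute [local instance] Classical.propDecidable

variable {V : Type*}

def gridGraph (m n : ℕ) : SimpleGraph (Fin m × Fin n) where
  Adj u v := (u.1 = v.1 ∧ (u.2.1 + 1 = v.2.1 ∨ v.2.1 + 1 = u.2.1)) ∨
             (u.2 = v.2 ∧ (u.1.1 + 1 = v.1.1 ∨ v.1.1 + 1 = u.1.1))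
  symm := by
    refine ⟨fun u v h => ?_⟩
    rcases h with ⟨h1, h2⟩ | ⟨h1, h2⟩
    · exact Or.inl ⟨h1.symm, h2.symm⟩
    · exact Or.inr ⟨h1.symm, h2.symm⟩
  loopless := by
    refine ⟨fun u h => ?_⟩
    rcases h with ⟨-, h | h⟩ | ⟨-, h | h⟩ <;> omega

def IsIndep (G : SimpleGraph V) (S : Finset V) : Prop := ∀ u ∈ S, ∀ v ∈ S, ¬ G.Adj u v

def totalCutComplex [Fintype V] (G : SimpleGraph V) (k : ℕ) : Set (Finset V) :=
  {σ | ∃ S : Finset V, S ⊆ σᶜ ∧ S.card = k ∧ IsIndep G S}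

def cutComplex [Fintype V] (G : SimpleGraph V) (k : ℕ) : Set (Finset V) :=
  {σ | ∃ S : Finset V, S ⊆ σᶜ ∧ S.card = k ∧ ¬ (G.induce (S : Set V)).Connected}

def linkC (K : Set (Finset V)) (W : Finset V) : Set (Finset V) :=
  {τ | τ ∩ W = ∅ ∧ τ ∪ W ∈ K}

def delC (K : Set (Finset V)) (v : V) : Set (Finset V) := {σ ∈ K | v ∉ σ}

def starC (K : Set (Finset V)) (F : Finset V) : Set (Finset V) := {σ ∈ K | σ ∪ F ∈ K}

def IsFacet (K : Set (Finset V)) (σ : Finset V) : Prop :=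
  σ ∈ K ∧ ∀ τ ∈ K, σ ⊆ τ → σ = τ

def geomReal [Fintype V] (K : Set (Finset V)) : Set (V → ℝ) :=
  {f | (∀ v, 0 ≤ f v) ∧ (∑ v, f v) = 1 ∧ ∃ σ ∈ K, ∀ v, f v ≠ 0 → v ∈ σ}

def nSphere (d : ℕ) : Set (EuclideanSpace ℝ (Fin (d + 1))) := Metric.sphere 0 1

noncomputable def spherePt (d : ℕ) : ↥(nSphere d) :=
  ⟨EuclideanSpace.single 0 1, by simp [nSphere, EuclideanSpace.norm_single]⟩

def wedgeRel (N d : ℕ) (a b : (Σ _ : Fin N, ↥(nSphere d)) ⊕ Unit) : Prop :=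
  a = b ∨ ((a = Sum.inr () ∨ ∃ i, a = Sum.inl ⟨i, spherePt d⟩) ∧
           (b = Sum.inr () ∨ ∃ i, b = Sum.inl ⟨i, spherePt d⟩))

def wedgeOfSpheres (N d : ℕ) : Type := Quot (wedgeRel N d)

noncomputable instance (N d : ℕ) : TopologicalSpace (wedgeOfSpheres N d) := by
  unfold wedgeOfSpheres; infer_instance


lemma induce_map_connected_iff {V : Type*} (G : SimpleGraph V) (A : Set V) (S : Finset ↥A) :
    ((G.induce A).induce ((S : Set ↥A))).Connected ↔
    (G.induce (((S.map ⟨Subtype.val, Subtype.val_injective⟩ : Finset V)) : Set V)).Connected := by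
  refine SimpleGraph.Iso.connected_iff ⟨?_, ?_⟩
  · exact (Equiv.subtypeSubtypeEquivSubtypeExists _ _).trans (Equiv.subtypeEquivRight (by
      intro v
      simp only [Finset.coe_map, Set.mem_image, Finset.mem_coe, Finset.mem_coe]
      constructor
      · rintro ⟨h, hs⟩; exact ⟨⟨v, h⟩, hs, rfl⟩
      · rintro ⟨⟨a, ha⟩, has, rfl⟩; exact ⟨ha, has⟩))
  · rintro ⟨⟨a, ha⟩, ha'⟩ ⟨⟨b, hb⟩, hb'⟩
    exact Iff.rfl

/-- For the `k`-cut complex: the link of `W` is the `k`-cut complex of `G ∖ W`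
when `W` is a face, and is void otherwise. -/
theorem link_cutComplex
    [Fintype V] (G : SimpleGraph V) (k : ℕ) (hk : 2 ≤ k) (W : Finset V) :
    (W ∈ cutComplex G k →
      linkC (cutComplex G k) W =
        (fun τ : Finset ↥{v : V | v ∉ W} =>
          τ.map ⟨Subtype.val, Subtype.val_injective⟩) ''
          cutComplex (G.induce {v : V | v ∉ W}) k) ∧
    (W ∉ cutComplex G k → linkC (cutComplex G k) W = ∅) := by
  classical
  constructor
  · intro hW
    set A : Set V := {v : V | v ∉ W} with hA
    ext τ
    constructor
    · rintro ⟨hdisj, S, hSsub, hScard, hSdis⟩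
      have hSW : ∀ v ∈ S, v ∉ W := fun v hv => by
        have := hSsub hv
        simp only [Finset.mem_compl, Finset.mem_union] at this
        exact fun h => this (Or.inr h)
      have hSτ : ∀ v ∈ S, v ∉ τ := fun v hv => by
        have := hSsub hv
        simp only [Finset.mem_compl, Finset.mem_union] at this
        exact fun h => this (Or.inl h)
      have hτW : ∀ v ∈ τ, v ∉ W := fun v hv h => by
        have : v ∈ τ ∩ W := Finset.mem_inter.mpr ⟨hv, h⟩
        simp [hdisj] at this
      set τ' : Finset ↥A := τ.subtype (· ∈ A) with hτ'
      set S' : Finset ↥A := S.subtype (· ∈ A) with hS'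
      have hmemτ' : ∀ a : ↥A, a ∈ τ' ↔ (a : V) ∈ τ := by
        intro a; simp [hτ', Finset.mem_subtype]
      have hmemS' : ∀ a : ↥A, a ∈ S' ↔ (a : V) ∈ S := by
        intro a; simp [hS', Finset.mem_subtype]
      have hSmap : S'.map ⟨Subtype.val, Subtype.val_injective⟩ = S := by
        ext v
        simp only [Finset.mem_map, Function.Embedding.coeFn_mk]
        constructor
        · rintro ⟨a, ha, rfl⟩; exact (hmemS' a).mp ha
        · intro hv; exact ⟨⟨v, hSW v hv⟩, (hmemS' _).mpr hv, rfl⟩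
      have hτmap : τ'.map ⟨Subtype.val, Subtype.val_injective⟩ = τ := by
        ext v
        simp only [Finset.mem_map, Function.Embedding.coeFn_mk]
        constructor
        · rintro ⟨a, ha, rfl⟩; exact (hmemτ' a).mp ha
        · intro hv; exact ⟨⟨v, hτW v hv⟩, (hmemτ' _).mpr hv, rfl⟩
      refine ⟨τ', ⟨S', ?_, ?_, ?_⟩, hτmap⟩
      · intro a ha
        simp only [Finset.mem_compl, hmemτ']
        exact hSτ a ((hmemS' a).mp ha)
      · have := Finset.card_map (⟨Subtype.val, Subtype.val_injective⟩ :
          ↥A ↪ V) (s := S')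
        rw [hSmap] at this
        omega
      · rw [show ((S' : Set ↥A)) = (S' : Set ↥A) from rfl]
        intro hc
        exact hSdis (by
          have := (induce_map_connected_iff G A S').mp hc
          rwa [hSmap] at this)
    · rintro ⟨τ', ⟨S', hsub, hcard, hdis⟩, rfl⟩
      set emb : ↥A ↪ V := ⟨Subtype.val, Subtype.val_injective⟩ with hemb
      have hWprop : ∀ a : ↥A, (a : V) ∉ W := fun a => a.2
      constructor
      · apply Finset.eq_empty_iff_forall_notMem.mpr
        intro v hv
        rw [Finset.mem_inter, Finset.mem_map] at hv
        obtain ⟨⟨a, ha, rfl⟩, hvW⟩ := hv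
        exact hWprop a hvW
      · refine ⟨S'.map emb, ?_, by simp [hcard], ?_⟩
        · intro v hv
          rw [Finset.mem_map] at hv
          obtain ⟨a, ha, rfl⟩ := hv
          rw [Finset.mem_compl, Finset.mem_union]
          rintro (h | h)
          · rw [Finset.mem_map] at h
            obtain ⟨b, hb, hba⟩ := h
            have : b = a := Subtype.val_injective hba
            subst this
            have hb' := hsub ha
            simp only [Finset.mem_compl] at hb'
            exact hb' hb
          · exact hWprop a h
        · intro hc
          exact hdis ((induce_map_connected_iff G A S').mpr hc)
  · intro hW
    ext τ
    simp only [Set.mem_empty_iff_false, iff_false]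
    rintro ⟨hdisj, S, hSsub, hScard, hSdis⟩
    exact hW ⟨S, fun v hv => by
      have := Finset.mem_compl.mp (hSsub hv)
      rw [Finset.mem_union] at this
      exact Finset.mem_compl.mpr fun h => this (Or.inr h), hScard, hSdis⟩
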